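/- Let G be any generator matrix of Ham(r,2) (not necessarily systematic) that contains systematic columns e_i and e_j for two data symbols i ≠ j, and let s be the node with v_i + v_j = v_s in the parity-check matrix. Then every achievable demand vector satisfies λ_i + λ_j ≤ 3. -/

import Mathlib

/-- `R` is a recovery set for data symbol `i` with respect to the generator matrix `G`. -/
def IsRecoverySet {k n : ℕ} {F : Type*} [Field F] (G : Matrix (Fin k) (Fin n) F)
    (i : Fin k) (R : Finset (Fin n)) : Prop :=
  (Pi.single i 1 : Fin k → F) ∈ Submodule.span F ((fun j => fun a => G a j) '' (R : Set (Fin n)))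

/-- The demand vector `lam` is achievable for the storage system encoded by `G` with unit
server capacities: there is a nonnegative allocation of each demand `lam i` over the recovery
sets of symbol `i` such that every node serves total load at most `1`. -/
def Achievable {k n : ℕ} {F : Type*} [Field F] (G : Matrix (Fin k) (Fin n) F)
    (lam : Fin k → ℝ) : Prop :=
  ∃ w : Fin k → Finset (Fin n) → ℝ,
    (∀ i R, 0 ≤ w i R) ∧
    (∀ i R, w i R ≠ 0 → IsRecoverySet G i R) ∧
    (∀ i, ∑ R : Finset (Fin n), w i R = lam i) ∧
    (∀ v : Fin n, (∑ i : Fin k, ∑ R : Finset (Fin n), if v ∈ R then w i R else 0) ≤ 1)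

lemma col_ne_zero {r n : ℕ} (hn : n = 2 ^ r - 1)
    (H : Matrix (Fin r) (Fin n) (ZMod 2))
    (hcols : ∀ v : Fin r → ZMod 2, v ≠ 0 → ∃! j : Fin n, (fun a => H a j) = v)
    (t : Fin n) : (fun a => H a t) ≠ 0 := by
  classical
  let f : {v : Fin r → ZMod 2 // v ≠ 0} → Fin n := fun v => (hcols v v.2).choose
  have hf : ∀ v, (fun a => H a (f v)) = (v : Fin r → ZMod 2) := fun v =>
    (hcols v v.2).choose_spec.1
  have hinj : Function.Injective f := by
    intro v w hvw
    apply Subtype.ext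
    rw [← hf v, ← hf w, hvw]
  have hcard : Fintype.card {v : Fin r → ZMod 2 // v ≠ 0} = Fintype.card (Fin n) := by
    have h1 : Fintype.card {v : Fin r → ZMod 2 // v ≠ 0}
        = Fintype.card (Fin r → ZMod 2) - 1 := by
      simp [Fintype.card_subtype_compl]
    rw [h1]
    simp [hn, Fintype.card_fun]
  have hsurj : Function.Surjective f :=
    ((Fintype.bijective_iff_injective_and_card f).2 ⟨hinj, hcard⟩).2
  obtain ⟨v, hv⟩ := hsurj t
  intro h0
  apply v.2
  have hve : (v : Fin r → ZMod 2) = fun a => H a t := by rw [← hf v, hv]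
  rw [hve]
  exact h0

lemma meets {r n k : ℕ}
    (H : Matrix (Fin r) (Fin n) (ZMod 2))
    (G : Matrix (Fin k) (Fin n) (ZMod 2))
    (hspan : Submodule.span (ZMod 2) (Set.range G) = LinearMap.ker H.mulVecLin)
    (i : Fin k) (si sj s : Fin n)
    (hsi : (fun b => G b si) = Pi.single i 1)
    (hs : (fun a => H a si) + (fun a => H a sj) = fun a => H a s)
    (hssi : s ≠ si) (hsjsi : sj ≠ si)
    (R : Finset (Fin n)) (hrec : IsRecoverySet G i R) :
    si ∈ R ∨ sj ∈ R ∨ s ∈ R := by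
  classical
  by_contra hcon
  push_neg at hcon
  obtain ⟨h1, h2, h3⟩ := hcon
  have himg : (fun j => fun a => G a j) '' (R : Set (Fin n))
      = Set.range (fun t : (R : Set (Fin n)) => fun a => G a (t : Fin n)) :=
    Set.image_eq_range _ _
  rw [IsRecoverySet, himg, Submodule.mem_span_range_iff_exists_fun] at hrec
  obtain ⟨c0, hc0⟩ := hrec
  set c : Fin n → ZMod 2 := fun t => if h : t ∈ R then c0 ⟨t, h⟩ else 0 with hc
  have hGc : ∀ b, ∑ t, G b t * c t = (Pi.single i 1 : Fin k → ZMod 2) b := by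
    intro b
    have h4 : ∑ t, G b t * c t = ∑ t ∈ R, G b t * c t := by
      rw [← Finset.sum_subset (Finset.subset_univ R)]
      intro t _ ht
      simp [hc, ht]
    rw [h4]
    have h5 := congrFun hc0 b
    simp only [Finset.sum_apply, Pi.smul_apply, smul_eq_mul] at h5
    rw [← h5, ← Finset.sum_attach R (fun t => G b t * c t)]
    apply Finset.sum_congr rfl
    intro t _
    simp [hc, t.2, mul_comm]
  set x : Fin n → ZMod 2 := fun t => c t + (if t = si then 1 else 0) with hx
  have hGx : ∀ b, ∑ t, G b t * x t = 0 := by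
    intro b
    have : ∑ t, G b t * x t = (∑ t, G b t * c t) + ∑ t, G b t * (if t = si then 1 else 0) := by
      rw [← Finset.sum_add_distrib]
      exact Finset.sum_congr rfl fun t _ => by ring
    rw [this, hGc]
    simp only [mul_ite, mul_one, mul_zero, Finset.sum_ite_eq', Finset.mem_univ, if_true]
    have := congrFun hsi b
    rw [this]
    have h2 : ∀ a : ZMod 2, a + a = 0 := by decide
    exact h2 _
  have hperp : ∀ z' ∈ Submodule.span (ZMod 2) (Set.range G), ∑ t, z' t * x t = 0 := by
    intro z' hz'
    induction hz' using Submodule.span_induction with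
    | mem w hw =>
      obtain ⟨b, rfl⟩ := hw
      exact hGx b
    | zero => simp
    | add u v _ _ hu hv =>
      have hsum : ∑ t, (u + v) t * x t = (∑ t, u t * x t) + ∑ t, v t * x t := by
        rw [← Finset.sum_add_distrib]
        exact Finset.sum_congr rfl fun t _ => by simp [add_mul]
      rw [hsum, hu, hv, add_zero]
    | smul a u _ hu =>
      have hsum : ∑ t, (a • u) t * x t = a * ∑ t, u t * x t := by
        rw [Finset.mul_sum]
        exact Finset.sum_congr rfl fun t _ => by simp [mul_assoc]
      rw [hsum, hu, mul_zero]
  set z : Fin n → ZMod 2 := fun t =>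
    (if t = si then 1 else 0) + (if t = sj then 1 else 0) + (if t = s then 1 else 0) with hzdef
  have hzker : z ∈ LinearMap.ker H.mulVecLin := by
    rw [LinearMap.mem_ker]
    funext a
    have : H.mulVecLin z a = ∑ t, H a t * z t := by
      simp [Matrix.mulVecLin_apply, Matrix.mulVec, dotProduct]
    rw [this]
    have hsplit : ∑ t, H a t * z t
        = (∑ t, H a t * (if t = si then 1 else 0)) + (∑ t, H a t * (if t = sj then 1 else 0))
          + (∑ t, H a t * (if t = s then 1 else 0)) := by
      rw [← Finset.sum_add_distrib, ← Finset.sum_add_distrib]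
      exact Finset.sum_congr rfl fun t _ => by simp [hzdef, mul_add, mul_ite, mul_one, mul_zero]
    rw [hsplit]
    simp only [mul_ite, mul_one, mul_zero, Finset.sum_ite_eq', Finset.mem_univ, if_true]
    have hsa : H a si + H a sj = H a s := by simpa using congrFun hs a
    rw [hsa, Pi.zero_apply]
    have h2 : ∀ a : ZMod 2, a + a = 0 := by decide
    exact h2 _
  have hzspan : z ∈ Submodule.span (ZMod 2) (Set.range G) := by rw [hspan]; exact hzker
  have hdot := hperp z hzspan
  have hval : ∑ t, z t * x t = x si + x sj + x s := by
    have hsplit : ∑ t, z t * x t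
        = (∑ t, (if t = si then 1 else 0) * x t) + (∑ t, (if t = sj then 1 else 0) * x t)
          + (∑ t, (if t = s then 1 else 0) * x t) := by
      rw [← Finset.sum_add_distrib, ← Finset.sum_add_distrib]
      exact Finset.sum_congr rfl fun t _ => by simp [hzdef, add_mul, ite_mul, one_mul, zero_mul]
    rw [hsplit]
    simp [ite_mul, one_mul, zero_mul, Finset.sum_ite_eq']
  rw [hval] at hdot
  have hxsi : x si = 1 := by simp [hx, hc, h1]
  have hxsj : x sj = 0 := by simp [hx, hc, h2, hsjsi]
  have hxs : x s = 0 := by simp [hx, hc, h3, hssi]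
  rw [hxsi, hxsj, hxs] at hdot
  revert hdot
  decide

theorem stmt14 {r n k : ℕ} (hn : n = 2 ^ r - 1) (hk : k = 2 ^ r - 1 - r)
    (H : Matrix (Fin r) (Fin n) (ZMod 2))
    (hcols : ∀ v : Fin r → ZMod 2, v ≠ 0 → ∃! j : Fin n, (fun a => H a j) = v)
    (G : Matrix (Fin k) (Fin n) (ZMod 2))
    (hspan : Submodule.span (ZMod 2) (Set.range G) = LinearMap.ker H.mulVecLin)
    (i j : Fin k) (hij : i ≠ j) (si sj s : Fin n)
    (hsi : (fun b => G b si) = Pi.single i 1)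
    (hsj : (fun b => G b sj) = Pi.single j 1)
    (hs : (fun a => H a si) + (fun a => H a sj) = fun a => H a s)
    (lam : Fin k → ℝ) (h : Achievable G lam) :
    lam i + lam j ≤ 3 := by
  classical
  -- distinctness facts
  have hsisj : si ≠ sj := by
    intro he
    rw [he, hsj] at hsi
    have := congrFun hsi j
    simp [Pi.single_apply, hij, (hij.symm : j ≠ i)] at this
  have hnzsi : (fun a => H a si) ≠ 0 := col_ne_zero hn H hcols si
  have hnzsj : (fun a => H a sj) ≠ 0 := col_ne_zero hn H hcols sj
  have hssi : s ≠ si := by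
    intro he
    apply hnzsj
    rw [he] at hs
    have h' : (fun a => H a si) + (fun a => H a sj) = (fun a => H a si) + 0 := by
      rw [add_zero]; exact hs
    exact add_left_cancel h'
  have hssj : s ≠ sj := by
    intro he
    apply hnzsi
    rw [he] at hs
    have h' : (fun a => H a sj) + (fun a => H a si) = (fun a => H a sj) + 0 := by
      rw [add_zero, add_comm]; exact hs
    exact add_left_cancel h'
  have key1 : ∀ R, IsRecoverySet G i R → si ∈ R ∨ sj ∈ R ∨ s ∈ R :=
    meets H G hspan i si sj s hsi hs hssi hsisj.symm
  have key2 : ∀ R, IsRecoverySet G j R → sj ∈ R ∨ si ∈ R ∨ s ∈ R :=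
    meets H G hspan j sj si s hsj (by rw [add_comm]; exact hs) hssj hsisj
  obtain ⟨w, hw0, hwrec, hwsum, hwcap⟩ := h
  set T : Finset (Fin n) := {si, sj, s} with hT
  have hbound : ∀ (i' : Fin k), (∀ R, w i' R ≠ 0 → ∃ v ∈ T, v ∈ R) →
      lam i' ≤ ∑ v ∈ T, ∑ R : Finset (Fin n), if v ∈ R then w i' R else 0 := by
    intro i' hmeet
    rw [← hwsum i', Finset.sum_comm]
    apply Finset.sum_le_sum
    intro R _
    by_cases hz : w i' R = 0
    · rw [hz]
      exact Finset.sum_nonneg fun v _ => by positivity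
    · obtain ⟨v0, hv0T, hv0R⟩ := hmeet R hz
      calc w i' R = (if v0 ∈ R then w i' R else 0) := by rw [if_pos hv0R]
        _ ≤ ∑ v ∈ T, if v ∈ R then w i' R else 0 := by
            apply Finset.single_le_sum (f := fun v => if v ∈ R then w i' R else 0) _ hv0T
            intro v _
            by_cases hvR : v ∈ R <;> simp [hvR, hw0 i' R]
  have hmi : ∀ R, w i R ≠ 0 → ∃ v ∈ T, v ∈ R := by
    intro R hz
    rcases key1 R (hwrec i R hz) with h' | h' | h'
    · exact ⟨si, by simp [hT], h'⟩
    · exact ⟨sj, by simp [hT], h'⟩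
    · exact ⟨s, by simp [hT], h'⟩
  have hmj : ∀ R, w j R ≠ 0 → ∃ v ∈ T, v ∈ R := by
    intro R hz
    rcases key2 R (hwrec j R hz) with h' | h' | h'
    · exact ⟨sj, by simp [hT], h'⟩
    · exact ⟨si, by simp [hT], h'⟩
    · exact ⟨s, by simp [hT], h'⟩
  have hstep : lam i + lam j ≤ ∑ v ∈ T,
      ((∑ R : Finset (Fin n), if v ∈ R then w i R else 0)
        + ∑ R : Finset (Fin n), if v ∈ R then w j R else 0) := by
    rw [Finset.sum_add_distrib]
    exact add_le_add (hbound i (hmi)) (hbound j (hmj))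
  have hcap : ∀ v, (∑ R : Finset (Fin n), if v ∈ R then w i R else 0)
      + (∑ R : Finset (Fin n), if v ∈ R then w j R else 0) ≤ 1 := by
    intro v
    refine le_trans ?_ (hwcap v)
    have : (∑ R : Finset (Fin n), if v ∈ R then w i R else 0)
        + (∑ R : Finset (Fin n), if v ∈ R then w j R else 0)
        = ∑ i' ∈ ({i, j} : Finset (Fin k)), ∑ R : Finset (Fin n), if v ∈ R then w i' R else 0 := by
      rw [Finset.sum_pair hij]
    rw [this]
    apply Finset.sum_le_sum_of_subset_of_nonneg (Finset.subset_univ _)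
    intro i' _ _
    exact Finset.sum_nonneg fun R _ => by by_cases hvR : v ∈ R <;> simp [hvR, hw0 i' R]
  calc lam i + lam j ≤ ∑ v ∈ T, ((∑ R : Finset (Fin n), if v ∈ R then w i R else 0)
        + ∑ R : Finset (Fin n), if v ∈ R then w j R else 0) := hstep
    _ ≤ ∑ v ∈ T, (1 : ℝ) := Finset.sum_le_sum fun v _ => hcap v
    _ = T.card := by simp
    _ ≤ 3 := by
        have : T.card ≤ 3 := by
          apply le_trans (Finset.card_insert_le _ _)
          simp [Finset.card_insert_le]
          exact lt_of_le_of_lt (Finset.card_insert_le _ _) (by simp)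
        exact_mod_cast this
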